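/- Identification of affine-support states: let V ≤ F_2^n have dimension r, let s_0 in F_2^n, and let p = 2^{-r} 1[· ∈ s_0 + V]. Suppose q is a probability distribution on F_2^n such that hat{q}(u) = hat{p}(u) for all u in a set Q containing a basis of V^⊥ and, if s_0 ∈ V, also one representative of every nonzero coset of F_2^n / V^⊥. Then q(0) = 2^{-r} if s_0 ∈ V and q(0) = 0 if s_0 ∉ V. -/

import Mathlib

/-- Mod-2 inner product on `F_2^n`. -/
def dot {n : ℕ} (u s : Fin n → ZMod 2) : ZMod 2 := ∑ j, u j * s j

/-- The sign `(-1)^{u·s}`. -/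
noncomputable def sgn {n : ℕ} (u s : Fin n → ZMod 2) : ℝ := (-1 : ℝ) ^ (dot u s).val

/-- Walsh transform of `p` at `u`. -/
noncomputable def walsh {n : ℕ} (p : (Fin n → ZMod 2) → ℝ) (u : Fin n → ZMod 2) : ℝ :=
  ∑ s : Fin n → ZMod 2, sgn u s * p s

/-- `p` is a probability distribution on `F_2^n`. -/
def IsProbDist {n : ℕ} (p : (Fin n → ZMod 2) → ℝ) : Prop :=
  (∀ s, 0 ≤ p s) ∧ ∑ s : Fin n → ZMod 2, p s = 1

namespace Stmt18Aux
open Finset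
open scoped Classical

variable {n : ℕ}

lemma zmod2_cases (a : ZMod 2) : a = 0 ∨ a = 1 := by revert a; decide

lemma zmod2_add_eq_zero {a b : ZMod 2} (h : a + b = 0) : a = b := by revert a b; decide

lemma zmod2_add_self (a : ZMod 2) : a + a = 0 := by revert a; decide

lemma dot_comm (u s : Fin n → ZMod 2) : dot u s = dot s u :=
  Finset.sum_congr rfl fun j _ => mul_comm _ _

lemma dot_add_left (u w s : Fin n → ZMod 2) : dot (u + w) s = dot u s + dot w s := by
  unfold dot
  rw [← Finset.sum_add_distrib]
  exact Finset.sum_congr rfl fun j _ => by simp [add_mul]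

lemma dot_add_right (u s t : Fin n → ZMod 2) : dot u (s + t) = dot u s + dot u t := by
  rw [dot_comm, dot_add_left, dot_comm s u, dot_comm t u]

lemma dot_zero_left (s : Fin n → ZMod 2) : dot (0 : Fin n → ZMod 2) s = 0 := by
  unfold dot; simp

lemma dot_zero_right (u : Fin n → ZMod 2) : dot u (0 : Fin n → ZMod 2) = 0 := by
  rw [dot_comm]; exact dot_zero_left u

lemma dot_smul_left (c : ZMod 2) (u s : Fin n → ZMod 2) :
    dot (c • u) s = c * dot u s := by
  unfold dot; rw [Finset.mul_sum]; exact Finset.sum_congr rfl fun j _ => by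
    simp [mul_assoc]

lemma sgn_of_dot_eq_zero {u s : Fin n → ZMod 2} (h : dot u s = 0) : sgn u s = 1 := by
  unfold sgn; rw [h]; norm_num

lemma sgn_of_dot_eq_one {u s : Fin n → ZMod 2} (h : dot u s = 1) : sgn u s = -1 := by
  unfold sgn; rw [h]; norm_num [ZMod.val_one]

lemma sgn_vals (u s : Fin n → ZMod 2) : sgn u s = 1 ∨ sgn u s = -1 := by
  rcases zmod2_cases (dot u s) with h | h
  · exact Or.inl (sgn_of_dot_eq_zero h)
  · exact Or.inr (sgn_of_dot_eq_one h)

lemma sgn_mul_self (u s : Fin n → ZMod 2) : sgn u s * sgn u s = 1 := by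
  rcases sgn_vals u s with h | h <;> rw [h] <;> norm_num

lemma sgn_add_right (u s t : Fin n → ZMod 2) : sgn u (s + t) = sgn u s * sgn u t := by
  unfold sgn
  rw [dot_add_right]
  rcases zmod2_cases (dot u s) with h1 | h1 <;> rcases zmod2_cases (dot u t) with h2 | h2 <;>
    rw [h1, h2] <;>
    norm_num [ZMod.val_one, show ((1 : ZMod 2) + 1) = 0 from by decide, show ZMod.val (2 : ZMod 2) = 0 from rfl]

lemma sgn_congr {u s t : Fin n → ZMod 2} (h : dot u s = dot u t) : sgn u s = sgn u t := by
  unfold sgn; rw [h]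

lemma dot_eq_of_sgn_eq {u s t : Fin n → ZMod 2} (h : sgn u s = sgn u t) :
    dot u s = dot u t := by
  rcases zmod2_cases (dot u s) with h1 | h1 <;> rcases zmod2_cases (dot u t) with h2 | h2 <;>
    rw [h1, h2] <;>
    first
    | rfl
    | (exfalso
       rw [sgn_of_dot_eq_zero ‹_›, sgn_of_dot_eq_one ‹_›] at h <;> norm_num at h)
    | (exfalso
       rw [sgn_of_dot_eq_one ‹_›, sgn_of_dot_eq_zero ‹_›] at h <;> norm_num at h)

/-- Generic pairing lemma. -/
lemma sum_eq_zero_of_equiv_neg {α : Type*} [Fintype α] (f : α → ℝ) (e : α ≃ α)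
    (h : ∀ a, f (e a) = - f a) : ∑ a, f a = 0 := by
  have h1 : ∑ a, f (e a) = ∑ a, f a := Equiv.sum_comp e f
  have h2 : ∑ a, f (e a) = - ∑ a, f a := by
    rw [← Finset.sum_neg_distrib]
    exact Finset.sum_congr rfl fun a _ => h a
  linarith [h1, h2]

/-- Annihilator of a set with respect to `dot`. -/
def Ann (S : Set (Fin n → ZMod 2)) : Submodule (ZMod 2) (Fin n → ZMod 2) where
  carrier := {u | ∀ t ∈ S, dot u t = 0}
  add_mem' := fun {a b} ha hb t ht => by rw [dot_add_left, ha t ht, hb t ht, add_zero]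
  zero_mem' := fun t _ => dot_zero_left t
  smul_mem' := fun c u hu t ht => by rw [dot_smul_left, hu t ht, mul_zero]

lemma mem_ann_iff {S : Set (Fin n → ZMod 2)} {u : Fin n → ZMod 2} :
    u ∈ Ann S ↔ ∀ t ∈ S, dot u t = 0 := Iff.rfl

/-- Character sum over a submodule. -/
lemma sum_indicator_sgn (U : Submodule (ZMod 2) (Fin n → ZMod 2)) (u : Fin n → ZMod 2) :
    ∑ s : Fin n → ZMod 2, (if s ∈ U then sgn u s else 0) =
      if (∀ v ∈ U, dot u v = 0) then (Nat.card U : ℝ) else 0 := by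
  by_cases h : ∀ v ∈ U, dot u v = 0
  · rw [if_pos h]
    have h1 : ∀ s : Fin n → ZMod 2, (if s ∈ U then sgn u s else 0) =
        (if s ∈ U then (1 : ℝ) else 0) := by
      intro s
      by_cases hs : s ∈ U
      · rw [if_pos hs, if_pos hs, sgn_of_dot_eq_zero (h s hs)]
      · rw [if_neg hs, if_neg hs]
    rw [Finset.sum_congr rfl fun s _ => h1 s, Finset.sum_boole]
    rw [Nat.card_eq_fintype_card, Fintype.card_subtype]
  · rw [if_neg h]
    push_neg at h
    obtain ⟨v0, hv0U, hv0⟩ := h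
    have hv1 : dot u v0 = 1 := (zmod2_cases _).resolve_left hv0
    apply sum_eq_zero_of_equiv_neg _ (Equiv.addRight v0)
    intro s
    show (if s + v0 ∈ U then sgn u (s + v0) else 0) = -(if s ∈ U then sgn u s else 0)
    by_cases hs : s ∈ U
    · rw [if_pos (U.add_mem hs hv0U), if_pos hs, sgn_add_right, sgn_of_dot_eq_one hv1]
      ring
    · have hs2 : s + v0 ∉ U := by
        intro hh
        have : s + v0 + v0 ∈ U := U.add_mem hh hv0U
        rw [add_assoc, show v0 + v0 = 0 from funext fun j => zmod2_add_self _, add_zero] at this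
        exact hs this
      rw [if_neg hs2, if_neg hs, neg_zero]

lemma dot_single (u : Fin n → ZMod 2) (j : Fin n) : dot u (Pi.single j 1) = u j := by
  unfold dot
  rw [Finset.sum_eq_single j]
  · simp
  · intro b _ hb; simp [Pi.single_eq_of_ne hb]
  · intro hj; exact absurd (Finset.mem_univ j) hj

lemma forall_dot_eq_zero_iff (u : Fin n → ZMod 2) :
    (∀ v : Fin n → ZMod 2, dot u v = 0) ↔ u = 0 := by
  constructor
  · intro h
    funext j
    rw [← dot_single u j, h]
    rfl
  · intro h v; rw [h]; exact dot_zero_left v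

lemma sum_sgn_right (u : Fin n → ZMod 2) :
    ∑ s : Fin n → ZMod 2, sgn u s = if u = 0 then ((2 : ℝ) ^ n) else 0 := by
  by_cases hu : u = 0
  · subst hu
    rw [if_pos rfl, Finset.sum_congr rfl fun s _ => sgn_of_dot_eq_zero (dot_zero_left s)]
    simp [Finset.card_univ]
  · rw [if_neg hu]
    have h : ¬ ∀ v, dot u v = 0 := fun h => hu ((forall_dot_eq_zero_iff u).mp h)
    push_neg at h
    obtain ⟨v0, hv0⟩ := h
    have hv1 : dot u v0 = 1 := (zmod2_cases _).resolve_left hv0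
    apply sum_eq_zero_of_equiv_neg _ (Equiv.addRight v0)
    intro s
    simp only [Equiv.coe_addRight]
    rw [sgn_add_right, sgn_of_dot_eq_one hv1]
    ring

lemma sum_sgn_left (s : Fin n → ZMod 2) :
    ∑ u : Fin n → ZMod 2, sgn u s = if s = 0 then ((2 : ℝ) ^ n) else 0 := by
  rw [Finset.sum_congr rfl fun u _ => show sgn u s = sgn s u by unfold sgn; rw [dot_comm]]
  exact sum_sgn_right s

lemma walsh_inversion (f : (Fin n → ZMod 2) → ℝ) :
    ∑ u : Fin n → ZMod 2, walsh f u = 2 ^ n * f 0 := by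
  unfold walsh
  rw [Finset.sum_comm]
  have h : ∀ s : Fin n → ZMod 2, ∑ u : Fin n → ZMod 2, sgn u s * f s =
      (if s = 0 then ((2:ℝ) ^ n) else 0) * f s := by
    intro s
    rw [← Finset.sum_mul, sum_sgn_left]
  rw [Finset.sum_congr rfl fun s _ => h s]
  rw [Finset.sum_congr rfl fun s _ => (ite_mul _ _ _ _ : _ = if s = 0 then (2:ℝ)^n * f s else 0 * f s)]
  simp


lemma card_submodule_pow (U : Submodule (ZMod 2) (Fin n → ZMod 2)) :
    Nat.card U = 2 ^ Module.finrank (ZMod 2) U := by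
  rw [Nat.card_eq_fintype_card, Module.card_eq_pow_finrank (K := ZMod 2), ZMod.card]

lemma card_mul_card_ann (U : Submodule (ZMod 2) (Fin n → ZMod 2)) :
    (Nat.card U : ℝ) * (Nat.card (Ann (U : Set (Fin n → ZMod 2))) : ℝ) = 2 ^ n := by
  have key : ∑ u : Fin n → ZMod 2, ∑ s : Fin n → ZMod 2,
      (if u ∈ U then sgn u s else 0) = 2 ^ n := by
    have h1 : ∀ u : Fin n → ZMod 2, ∑ s : Fin n → ZMod 2, (if u ∈ U then sgn u s else 0) =
        if u = 0 then ((2:ℝ)^n) else 0 := by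
      intro u
      by_cases hu : u ∈ U
      · simp only [if_pos hu]
        exact sum_sgn_right u
      · simp only [if_neg hu, Finset.sum_const_zero]
        rw [if_neg]
        rintro rfl
        exact hu U.zero_mem
    rw [Finset.sum_congr rfl fun u _ => h1 u]
    simp
  rw [Finset.sum_comm] at key
  have h2 : ∀ s : Fin n → ZMod 2, ∑ u : Fin n → ZMod 2, (if u ∈ U then sgn u s else 0) =
      if s ∈ Ann (U : Set (Fin n → ZMod 2)) then (Nat.card U : ℝ) else 0 := by
    intro s
    have e1 : ∑ u : Fin n → ZMod 2, (if u ∈ U then sgn u s else 0) =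
        ∑ u : Fin n → ZMod 2, (if u ∈ U then sgn s u else 0) :=
      Finset.sum_congr rfl fun u _ => by
        by_cases hu : u ∈ U <;> simp [hu, sgn, dot_comm u s]
    rw [e1, sum_indicator_sgn]
    exact if_congr ⟨fun h t ht => h t ht, fun h v hv => h v hv⟩ rfl rfl
  rw [Finset.sum_congr rfl fun s _ => h2 s] at key
  have h3 : ∑ s : Fin n → ZMod 2,
      (if s ∈ Ann (U : Set (Fin n → ZMod 2)) then (Nat.card U : ℝ) else 0) =
      (Nat.card U : ℝ) * ∑ s : Fin n → ZMod 2,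
        (if s ∈ Ann (U : Set (Fin n → ZMod 2)) then (1:ℝ) else 0) := by
    rw [Finset.mul_sum]
    exact Finset.sum_congr rfl fun s _ => by
      by_cases h : s ∈ Ann (U : Set (Fin n → ZMod 2)) <;> simp [h]
  rw [h3, Finset.sum_boole] at key
  have h4 : (Nat.card (Ann (U : Set (Fin n → ZMod 2))) : ℝ) =
      ((Finset.univ.filter (fun x => x ∈ Ann (U : Set (Fin n → ZMod 2)))).card : ℝ) := by
    rw [Nat.card_eq_fintype_card, Fintype.card_subtype]
  rw [h4]
  convert key using 3

lemma ann_ann (V : Submodule (ZMod 2) (Fin n → ZMod 2)) :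
    Ann ((Ann (V : Set (Fin n → ZMod 2))) : Set (Fin n → ZMod 2)) = V := by
  have hle : V ≤ Ann ((Ann (V : Set (Fin n → ZMod 2))) : Set (Fin n → ZMod 2)) := by
    intro v hv u hu
    rw [dot_comm]
    exact hu v hv
  have c1 := card_mul_card_ann V
  have c2 := card_mul_card_ann (Ann (V : Set (Fin n → ZMod 2)))
  have hpos : (0:ℝ) < (Nat.card (Ann (V : Set (Fin n → ZMod 2))) : ℝ) := by
    have : 0 < Nat.card (Ann (V : Set (Fin n → ZMod 2))) := Nat.card_pos
    exact_mod_cast this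
  have hcard : (Nat.card (Ann ((Ann (V : Set (Fin n → ZMod 2))) : Set (Fin n → ZMod 2))) : ℝ)
      = (Nat.card V : ℝ) := by
    have := mul_left_cancel₀ (ne_of_gt hpos)
      (show (Nat.card (Ann (V : Set (Fin n → ZMod 2))) : ℝ) *
          (Nat.card (Ann ((Ann (V : Set (Fin n → ZMod 2))) : Set (Fin n → ZMod 2))) : ℝ) =
          (Nat.card (Ann (V : Set (Fin n → ZMod 2))) : ℝ) * (Nat.card V : ℝ) by
        rw [c2]
        rw [mul_comm] at c1
        rw [c1])
    exact this
  have hcardn : Nat.card (Ann ((Ann (V : Set (Fin n → ZMod 2))) : Set (Fin n → ZMod 2)))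
      = Nat.card V := by exact_mod_cast hcard
  rw [card_submodule_pow, card_submodule_pow] at hcardn
  have hfr := Nat.pow_right_injective (le_refl 2) hcardn
  exact (Submodule.eq_of_le_of_finrank_le hle (le_of_eq hfr)).symm

lemma walsh_p_formula {r : ℕ} (V : Submodule (ZMod 2) (Fin n → ZMod 2))
    (hr : Module.finrank (ZMod 2) V = r) (s0 : Fin n → ZMod 2)
    (p : (Fin n → ZMod 2) → ℝ)
    (hp : ∀ s, p s = if s + s0 ∈ V then ((2 : ℝ) ^ r)⁻¹ else 0) (u : Fin n → ZMod 2) :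
    walsh p u = if (∀ v ∈ V, dot u v = 0) then sgn u s0 else 0 := by
  have hcardV : (Nat.card V : ℝ) = 2 ^ r := by
    rw [card_submodule_pow, hr]
    push_cast
    ring
  unfold walsh
  have h1 : ∀ s : Fin n → ZMod 2, sgn u s * p s =
      ((2:ℝ)^r)⁻¹ * (sgn u s0 * (if s + s0 ∈ V then sgn u (s + s0) else 0)) := by
    intro s
    rw [hp s]
    by_cases h : s + s0 ∈ V
    · rw [if_pos h, if_pos h, sgn_add_right,
        show sgn u s0 * (sgn u s * sgn u s0) = sgn u s * (sgn u s0 * sgn u s0) from by ring,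
        sgn_mul_self, mul_one]
      ring
    · rw [if_neg h, if_neg h]
      ring
  rw [Finset.sum_congr rfl fun s _ => h1 s, ← Finset.mul_sum, ← Finset.mul_sum]
  have h2 : ∑ s : Fin n → ZMod 2, (if s + s0 ∈ V then sgn u (s + s0) else 0) =
      ∑ t : Fin n → ZMod 2, (if t ∈ V then sgn u t else 0) :=
    Fintype.sum_equiv (Equiv.addRight s0) _ _ (fun s => by rfl)
  rw [h2, sum_indicator_sgn, hcardV]
  by_cases h : ∀ v ∈ V, dot u v = 0
  · rw [if_pos h, if_pos h, mul_comm (sgn u s0), ← mul_assoc,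
      inv_mul_cancel₀ (by positivity : ((2:ℝ)^r) ≠ 0), one_mul]
  · rw [if_neg h, if_neg h, mul_zero, mul_zero]

end Stmt18Aux

open scoped Classical in
/-- Identification of affine-support syndrome states from annihilator and coset data. -/
theorem stmt18 {n r : ℕ} (V : Submodule (ZMod 2) (Fin n → ZMod 2))
    (hr : Module.finrank (ZMod 2) V = r) (s0 : Fin n → ZMod 2)
    (p : (Fin n → ZMod 2) → ℝ)
    (hp : ∀ s, p s = if s + s0 ∈ V then ((2 : ℝ) ^ r)⁻¹ else 0)
    (q : (Fin n → ZMod 2) → ℝ) (hq : IsProbDist q)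
    (Q : Set (Fin n → ZMod 2))
    (hagree : ∀ u ∈ Q, walsh q u = walsh p u)
    (hbasis : ∃ B : Finset (Fin n → ZMod 2), ↑B ⊆ Q ∧
      (∀ b ∈ B, ∀ v ∈ V, dot b v = 0) ∧
      LinearIndependent (ZMod 2) (Subtype.val : {x // x ∈ B} → (Fin n → ZMod 2)) ∧
      (∀ u : Fin n → ZMod 2, (∀ v ∈ V, dot u v = 0) →
        u ∈ Submodule.span (ZMod 2) (B : Set (Fin n → ZMod 2))))
    (hcoset : s0 ∈ V → ∀ w : Fin n → ZMod 2, ¬ (∀ v ∈ V, dot w v = 0) →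
      ∃ u ∈ Q, ∀ v ∈ V, dot u v = dot w v) :
    q 0 = if s0 ∈ V then ((2 : ℝ) ^ r)⁻¹ else 0 := by
  classical
  obtain ⟨hq0, hq1⟩ := hq
  obtain ⟨B, hBQ, hBann, hBli, hBspan⟩ := hbasis
  have hwp : ∀ u, walsh p u = if (∀ v ∈ V, dot u v = 0) then sgn u s0 else 0 :=
    Stmt18Aux.walsh_p_formula V hr s0 p hp
  have hstepB : ∀ b ∈ B, ∀ s, q s ≠ 0 → dot b s = dot b s0 := by
    intro b hb s hqs
    have hwq : walsh q b = sgn b s0 := by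
      rw [hagree b (hBQ hb), hwp b, if_pos (hBann b hb)]
    have key : ∑ t : Fin n → ZMod 2, (1 - sgn b s0 * sgn b t) * q t = 0 := by
      have expand : ∀ t : Fin n → ZMod 2,
          (1 - sgn b s0 * sgn b t) * q t = q t - sgn b s0 * (sgn b t * q t) := fun t => by ring
      rw [Finset.sum_congr rfl fun t _ => expand t, Finset.sum_sub_distrib, hq1, ← Finset.mul_sum,
        show (∑ t : Fin n → ZMod 2, sgn b t * q t) = walsh q b from rfl, hwq,
        Stmt18Aux.sgn_mul_self]
      ring
    have hnn : ∀ t ∈ Finset.univ, (0:ℝ) ≤ (1 - sgn b s0 * sgn b t) * q t := by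
      intro t _
      apply mul_nonneg _ (hq0 t)
      rcases Stmt18Aux.sgn_vals b s0 with h3 | h3 <;> rcases Stmt18Aux.sgn_vals b t with h4 | h4 <;>
        rw [h3, h4] <;> norm_num
    have hterm := (Finset.sum_eq_zero_iff_of_nonneg hnn).mp key s (Finset.mem_univ s)
    have h1 : 1 - sgn b s0 * sgn b s = 0 := by
      rcases mul_eq_zero.mp hterm with h | h
      · exact h
      · exact absurd h hqs
    have h2 : sgn b s = sgn b s0 := by
      rcases Stmt18Aux.sgn_vals b s0 with h3 | h3 <;> rcases Stmt18Aux.sgn_vals b s with h4 | h4 <;>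
        rw [h3, h4] at h1 ⊢ <;> norm_num at h1
    exact Stmt18Aux.dot_eq_of_sgn_eq h2
  have hsupp : ∀ s, q s ≠ 0 → ∀ u, (∀ v ∈ V, dot u v = 0) → dot u s = dot u s0 := by
    intro s hqs u hu
    have hle : Submodule.span (ZMod 2) (B : Set (Fin n → ZMod 2)) ≤
        Stmt18Aux.Ann {s + s0} := by
      rw [Submodule.span_le]
      intro b hb t ht
      rw [Set.mem_singleton_iff] at ht
      subst ht
      rw [Stmt18Aux.dot_add_right, hstepB b hb s hqs]
      exact Stmt18Aux.zmod2_add_self _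
    have h1 : dot u (s + s0) = 0 := hle (hBspan u hu) (s + s0) rfl
    exact Stmt18Aux.zmod2_add_eq_zero (by rwa [← Stmt18Aux.dot_add_right])
  by_cases hs0 : s0 ∈ V
  · rw [if_pos hs0]
    have hall : ∀ u, walsh q u = walsh p u := by
      intro u
      by_cases hu : ∀ v ∈ V, dot u v = 0
      · rw [hwp u, if_pos hu, Stmt18Aux.sgn_of_dot_eq_zero (hu s0 hs0)]
        unfold walsh
        rw [← hq1]
        apply Finset.sum_congr rfl
        intro s _
        by_cases hqs : q s = 0
        · rw [hqs, mul_zero]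
        · rw [Stmt18Aux.sgn_of_dot_eq_zero ((hsupp s hqs u hu).trans (hu s0 hs0)), one_mul]
      · obtain ⟨u', hu'Q, hu'dot⟩ := hcoset hs0 u hu
        have hu'n : ¬ ∀ v ∈ V, dot u' v = 0 := by
          intro h
          exact hu fun v hv => by rw [← hu'dot v hv]; exact h v hv
        have hann : ∀ v ∈ V, dot (u + u') v = 0 := by
          intro v hv
          rw [Stmt18Aux.dot_add_left, hu'dot v hv]
          exact Stmt18Aux.zmod2_add_self _
        have heq : walsh q u = walsh q u' := by
          unfold walsh
          apply Finset.sum_congr rfl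
          intro s _
          by_cases hqs : q s = 0
          · rw [hqs, mul_zero, mul_zero]
          · have h1 : dot (u + u') s = dot (u + u') s0 := hsupp s hqs _ hann
            have h2 : dot (u + u') s0 = 0 := hann s0 hs0
            have h3 : dot u s = dot u' s :=
              Stmt18Aux.zmod2_add_eq_zero (by rw [← Stmt18Aux.dot_add_left, h1, h2])
            rw [show sgn u s = sgn u' s from by unfold sgn; rw [h3]]
        rw [heq, hagree u' hu'Q, hwp u', hwp u, if_neg hu, if_neg hu'n]
    have hsum : ∑ u : Fin n → ZMod 2, walsh q u = ∑ u : Fin n → ZMod 2, walsh p u :=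
      Finset.sum_congr rfl fun u _ => hall u
    have hq0p0 : q 0 = p 0 :=
      mul_left_cancel₀ (by positivity : ((2:ℝ)^n) ≠ 0)
        ((Stmt18Aux.walsh_inversion q).symm.trans
          (hsum.trans (Stmt18Aux.walsh_inversion p)))
    rw [hq0p0, hp 0, if_pos (by rwa [zero_add])]
  · rw [if_neg hs0]
    by_contra hne
    have h0 : s0 ∈ Stmt18Aux.Ann
        ((Stmt18Aux.Ann (V : Set (Fin n → ZMod 2))) : Set (Fin n → ZMod 2)) := by
      intro t ht
      have htann : ∀ v ∈ V, dot t v = 0 := fun v hv => ht v hv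
      have hd := hsupp 0 hne t htann
      rw [Stmt18Aux.dot_comm, ← hd, Stmt18Aux.dot_zero_right]
    rw [Stmt18Aux.ann_ann] at h0
    exact hs0 h0
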